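/- (Stronger Central Sets Theorem, noncommutative case) Let (S,·) be a semigroup and A ⊆ S a central set. Then there exist m : 𝒫_f(ℕ→S) → ℕ, α with α(F) ∈ S^{m(F)+1}, and τ with τ(F) ∈ 𝒥_{m(F)}, such that: (1) if F ⊊ G then τ(F)(m(F)) < τ(G)(1); (2) whenever n ∈ ℕ, G₁ ⊊ G₂ ⊊ ⋯ ⊊ G_n are finite nonempty sets of sequences and f_i ∈ G_i for each i, then ∏_{i=1}^n x(m(G_i), α(G_i), τ(G_i), f_i) ∈ A. -/

import Mathlib

/-- `A` is thick: every finite nonempty set can be right-translated into `A`. -/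
def Thick {S : Type*} [Semigroup S] (A : Set S) : Prop :=
  ∀ E : Finset S, E.Nonempty → ∃ x : S, ∀ e ∈ E, e * x ∈ A

def Syndetic {S : Type*} [Semigroup S] (A : Set S) : Prop :=
  ∃ F : Finset S, F.Nonempty ∧ ∀ s : S, ∃ t ∈ F, t * s ∈ A

def PiecewiseSyndetic {S : Type*} [Semigroup S] (A : Set S) : Prop :=
  ∃ F : Finset S, F.Nonempty ∧ Thick {s : S | ∃ t ∈ F, t * s ∈ A}

def ThickAdd {S : Type*} [AddSemigroup S] (A : Set S) : Prop :=
  ∀ E : Finset S, E.Nonempty → ∃ x : S, ∀ e ∈ E, e + x ∈ A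

def SyndeticAdd {S : Type*} [AddSemigroup S] (A : Set S) : Prop :=
  ∃ F : Finset S, F.Nonempty ∧ ∀ s : S, ∃ t ∈ F, t + s ∈ A

def PiecewiseSyndeticAdd {S : Type*} [AddSemigroup S] (A : Set S) : Prop :=
  ∃ F : Finset S, F.Nonempty ∧ ThickAdd {s : S | ∃ t ∈ F, t + s ∈ A}

/-- Sum of `f t` over a nonempty finite `H ⊆ ℕ` in a commutative semigroup
(junk value `f 0` when `H = ∅`). -/
def fSum {S : Type*} [AddCommSemigroup S] (H : Finset ℕ) (f : ℕ → S) : S :=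
  match Finset.sort H (· ≤ ·) with
  | [] => f 0
  | a :: l => l.foldl (fun s t => s + f t) (f a)

/-- `J`-set in a commutative semigroup. -/
def JSetAdd {S : Type*} [AddCommSemigroup S] (A : Set S) : Prop :=
  ∀ F : Finset (ℕ → S), F.Nonempty →
    ∃ (a : S) (H : Finset ℕ), H.Nonempty ∧ ∀ f ∈ F, a + fSum H f ∈ A

/-- `x(m,a,t,f) = a(0)·f(t 0)·a(1)·f(t 1)⋯f(t (m-1))·a(m)` (0-indexed version of
`(∏_{j=1}^m a(j)·f(t(j)))·a(m+1)`). -/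
def xNC {S : Type*} [Semigroup S] (m : ℕ) (a : ℕ → S) (t : ℕ → ℕ) (f : ℕ → S) : S :=
  (List.range m).foldl (fun s j => s * f (t j) * a (j + 1)) (a 0)

/-- `J`-set in a not-necessarily-commutative semigroup. -/
def JSetNC {S : Type*} [Semigroup S] (A : Set S) : Prop :=
  ∀ G : Finset (ℕ → S), G.Nonempty →
    ∃ (m : ℕ) (a : ℕ → S) (t : ℕ → ℕ), 1 ≤ m ∧
      (∀ i j : ℕ, i < j → j < m → t i < t j) ∧
      ∀ f ∈ G, xNC m a t f ∈ A

/-- `v 0 + v 1 + ⋯ + v r` in an additive semigroup. -/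
def seqSum {S : Type*} [AddSemigroup S] (v : ℕ → S) (r : ℕ) : S :=
  (List.range r).foldl (fun s j => s + v (j + 1)) (v 0)

/-- `v 0 * v 1 * ⋯ * v r` in a semigroup. -/
def seqProd {S : Type*} [Semigroup S] (v : ℕ → S) (r : ℕ) : S :=
  (List.range r).foldl (fun s j => s * v (j + 1)) (v 0)

/-- Collectionwise piecewise syndetic family (multiplicative). -/
def CollectionwisePS {S : Type*} [Semigroup S] (𝒜 : Set (Set S)) : Prop :=
  ∃ (G : Finset (Set S) → Finset S) (x : Finset (Set S) → Finset S → S),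
    ∀ (F : Finset S) (ℱ ℋ : Finset (Set S)), ℱ.Nonempty → ↑ℋ ⊆ 𝒜 → ℱ ⊆ ℋ →
      ∀ y ∈ F, ∃ t ∈ G ℱ, t * (y * x ℋ F) ∈ ⋂₀ (ℱ : Set (Set S))

/-- Collectionwise piecewise syndetic family (additive). -/
def CollectionwisePSAdd {S : Type*} [AddSemigroup S] (𝒜 : Set (Set S)) : Prop :=
  ∃ (G : Finset (Set S) → Finset S) (x : Finset (Set S) → Finset S → S),
    ∀ (F : Finset S) (ℱ ℋ : Finset (Set S)), ℱ.Nonempty → ↑ℋ ⊆ 𝒜 → ℱ ⊆ ℋ →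
      ∀ y ∈ F, ∃ t ∈ G ℱ, t + (y + x ℋ F) ∈ ⋂₀ (ℱ : Set (Set S))

/-- Central set (multiplicative), via the combinatorial characterization. -/
def Central {S : Type*} [Semigroup S] (A : Set S) : Prop :=
  ∃ (I : Type) (C : I → Set S), Nonempty I ∧
    (∀ N, C N ⊆ A) ∧
    (∀ N M : I, ∃ P : I, C P ⊆ C N ∧ C P ⊆ C M) ∧
    (∀ N : I, ∀ y ∈ C N, ∃ M : I, C M ⊆ {s : S | y * s ∈ C N}) ∧
    CollectionwisePS {B : Set S | ∃ N : I, B = C N}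

/-- Central set (additive), via the combinatorial characterization. -/
def CentralAdd {S : Type*} [AddSemigroup S] (A : Set S) : Prop :=
  ∃ (I : Type) (C : I → Set S), Nonempty I ∧
    (∀ N, C N ⊆ A) ∧
    (∀ N M : I, ∃ P : I, C P ⊆ C N ∧ C P ⊆ C M) ∧
    (∀ N : I, ∀ y ∈ C N, ∃ M : I, C M ⊆ {s : S | y + s ∈ C N}) ∧
    CollectionwisePSAdd {B : Set S | ∃ N : I, B = C N}

/- ===== auxiliary lemmas ===== -/
namespace SCST

variable {S : Type*} [Semigroup S]

theorem xNC_succ (m : ℕ) (a : ℕ → S) (t : ℕ → ℕ) (f : ℕ → S) :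
    xNC (m + 1) a t f = xNC m a t f * f (t m) * a (m + 1) := by
  simp [xNC, List.range_succ]

theorem xNC_congr {m : ℕ} {a a' : ℕ → S} {t t' : ℕ → ℕ} (f : ℕ → S)
    (ha : ∀ j ≤ m, a j = a' j) (ht : ∀ i < m, t i = t' i) :
    xNC m a t f = xNC m a' t' f := by
  induction m with
  | zero => simp [xNC, ha 0 le_rfl]
  | succ k ih =>
      rw [xNC_succ, xNC_succ, ih (fun j hj => ha j (hj.trans k.le_succ))
        (fun i hi => ht i (hi.trans k.lt_succ_self)),
        ht k k.lt_succ_self, ha (k+1) le_rfl]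

theorem xNC_mul (k : ℕ) (a : ℕ → S) (t : ℕ → ℕ) (f : ℕ → S) (c : S) :
    xNC (k + 1) (Function.update a (k + 1) (a (k + 1) * c)) t f = xNC (k + 1) a t f * c := by
  rw [xNC_succ, xNC_succ, Function.update_self,
    xNC_congr f (a' := a) (t' := t)
      (fun j hj => Function.update_of_ne (by omega) _ _) (fun _ _ => rfl)]
  simp [mul_assoc]

theorem xNC_comp (m : ℕ) (a : ℕ → S) (t : ℕ → ℕ) (u : ℕ → ℕ) (f : ℕ → S) :
    xNC m a t (fun i => f (u i)) = xNC m a (fun j => u (t j)) f := rfl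

theorem seqProd_succ (v : ℕ → S) (n : ℕ) :
    seqProd v (n + 1) = seqProd v n * v (n + 1) := by
  simp [seqProd, List.range_succ]

theorem seqProd_congr {v v' : ℕ → S} {n : ℕ} (h : ∀ i ≤ n, v i = v' i) :
    seqProd v n = seqProd v' n := by
  induction n with
  | zero => simpa [seqProd] using h 0 le_rfl
  | succ k ih =>
      rw [seqProd_succ, seqProd_succ, ih (fun i hi => h i (hi.trans k.le_succ)),
        h (k+1) le_rfl]

/-- `Wfold n c p = p * c 0 * c 1 * ⋯ * c (n-1)`. -/
def Wfold (n : ℕ) (c : ℕ → S) (p : S) : S :=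
  (List.range n).foldl (fun s j => s * c j) p

theorem Wfold_succ (n : ℕ) (c : ℕ → S) (p : S) :
    Wfold (n + 1) c p = Wfold n c p * c n := by
  simp [Wfold, List.range_succ]

theorem Wfold_congr {n : ℕ} {c c' : ℕ → S} (p : S) (h : ∀ j < n, c j = c' j) :
    Wfold n c p = Wfold n c' p := by
  induction n with
  | zero => rfl
  | succ k ih =>
      rw [Wfold_succ, Wfold_succ, ih (fun j hj => h j (hj.trans k.lt_succ_self)),
        h k k.lt_succ_self]

theorem mul_Wfold (n : ℕ) (c : ℕ → S) (p y : S) :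
    y * Wfold n c p = Wfold n c (y * p) := by
  induction n with
  | zero => rfl
  | succ k ih => rw [Wfold_succ, Wfold_succ, ← mul_assoc, ih]

/-- The key rewriting lemma: a fold whose letters are `f j * s₀` at "active"
positions and constants elsewhere is of the form `xNC m a t f` with `a, t`
independent of `f`. -/
theorem wfold_xNC (s₀ : S) (fix : ℕ → S) (p : S) (n : ℕ) (act : ℕ → Prop)
    [DecidablePred act] (hact : ∃ j, j < n ∧ act j) :
    ∃ (m : ℕ) (a : ℕ → S) (t : ℕ → ℕ), 1 ≤ m ∧
      (∀ i j, i < j → j < m → t i < t j) ∧ (∀ i, i < m → t i < n) ∧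
      ∀ f : ℕ → S,
        Wfold n (fun j => (if act j then f j else fix j) * s₀) p = xNC m a t f := by
  induction n with
  | zero => exact absurd hact (by simp)
  | succ k ih =>
      by_cases hex : ∃ j, j < k ∧ act j
      · obtain ⟨m, a, t, h1, hmono, hbnd, heq⟩ := ih hex
        by_cases han : act k
        · refine ⟨m + 1, Function.update a (m + 1) s₀, Function.update t m k, le_add_self, ?_, ?_, ?_⟩
          · intro i j hij hj
            rcases Nat.lt_succ_iff_lt_or_eq.mp hj with hj' | rfl
            · rw [Function.update_of_ne (by omega), Function.update_of_ne (by omega)]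
              exact hmono i j hij hj'
            · rw [Function.update_of_ne (by omega), Function.update_self]
              exact hbnd i (by omega)
          · intro i hi
            rcases Nat.lt_succ_iff_lt_or_eq.mp hi with hi' | rfl
            · rw [Function.update_of_ne (by omega)]
              exact (hbnd i hi').trans k.lt_succ_self
            · rw [Function.update_self]; exact k.lt_succ_self
          · intro f
            have hc : xNC m (Function.update a (m + 1) s₀) (Function.update t m k) f
                = xNC m a t f :=
              xNC_congr f
                (fun j hj => Function.update_of_ne (show j ≠ m + 1 by omega) _ _)
                (fun i hi => Function.update_of_ne (show i ≠ m by omega) _ _)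
            rw [Wfold_succ, heq f, if_pos han, xNC_succ, hc,
              Function.update_self, Function.update_self, mul_assoc]
        · refine ⟨m, Function.update a m (a m * (fix k * s₀)), t, h1, hmono,
            fun i hi => (hbnd i hi).trans k.lt_succ_self, ?_⟩
          intro f
          obtain ⟨k', rfl⟩ : ∃ k', m = k' + 1 := ⟨m - 1, by omega⟩
          rw [Wfold_succ, heq f, if_neg han, xNC_mul]
      · have han : act k := by
          obtain ⟨j, hj, hactj⟩ := hact
          rcases Nat.lt_succ_iff_lt_or_eq.mp hj with hj' | rfl
          · exact absurd ⟨j, hj', hactj⟩ hex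
          · exact hactj
        refine ⟨1, fun i => if i = 0 then Wfold k (fun j => fix j * s₀) p else s₀,
          fun _ => k, le_rfl, by omega, fun i _ => k.lt_succ_self, ?_⟩
        intro f
        have hq : Wfold k (fun j => (if act j then f j else fix j) * s₀) p
            = Wfold k (fun j => fix j * s₀) p :=
          Wfold_congr p (fun j hj => by rw [if_neg (fun h => hex ⟨j, hj, h⟩)])
        rw [Wfold_succ, hq, if_pos han]
        simp [xNC, List.range_succ, mul_assoc]

/-- Piecewise-syndetic-style sets are noncommutative `J`-sets (via Hales–Jewett). -/
theorem pw_jset (B : Set S) (s₀ : S) (H : Finset S)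
    (hH : ∀ E : Finset S, ∃ x : S, ∀ e ∈ E, ∃ t ∈ H, t * (e * x) ∈ B) :
    JSetNC B := by
  classical
  intro Gf hGf
  obtain ⟨ι, ιfin, hHJ⟩ :=
    Combinatorics.Line.exists_mono_in_high_dimension {f // f ∈ Gf} {t // t ∈ H}
  haveI := ιfin
  set n := Fintype.card ι with hn
  let e : ι ≃ Fin n := Fintype.equivFin ι
  let Y : (ι → {f // f ∈ Gf}) → S := fun w =>
    Wfold n (fun j => (if h : j < n then (w (e.symm ⟨j, h⟩)).1 j else s₀) * s₀) s₀
  obtain ⟨x, hx⟩ := hH ((Finset.univ : Finset (ι → {f // f ∈ Gf})).image Y)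
  have hcol : ∀ w, ∃ t ∈ H, t * (Y w * x) ∈ B := fun w =>
    hx (Y w) (Finset.mem_image_of_mem Y (Finset.mem_univ w))
  let col : (ι → {f // f ∈ Gf}) → {t // t ∈ H} := fun w =>
    ⟨(hcol w).choose, (hcol w).choose_spec.1⟩
  obtain ⟨l, c, hc⟩ := hHJ col
  have hmem : ∀ a : {f // f ∈ Gf}, (c : S) * (Y (l a) * x) ∈ B := by
    intro a
    have h2 := (hcol (l a)).choose_spec.2
    have h4 : ((col (l a) : {t // t ∈ H}) : S) = (c : S) := by rw [hc a]
    rw [← h4]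
    exact h2
  -- the active positions and fixed letters
  let act : ℕ → Prop := fun j => ∃ h : j < n, l.idxFun (e.symm ⟨j, h⟩) = none
  let fix : ℕ → S := fun j =>
    if h : j < n then ((l.idxFun (e.symm ⟨j, h⟩)).map (fun b => b.1 j)).getD s₀ else s₀
  have hact : ∃ j, j < n ∧ act j := by
    obtain ⟨i, hi⟩ := l.proper
    refine ⟨(e i).1, (e i).2, (e i).2, ?_⟩
    rw [show (⟨(e i).1, (e i).2⟩ : Fin n) = e i from Fin.eta _ _, Equiv.symm_apply_apply]
    exact hi
  obtain ⟨m, a, t, h1, hmono, hbnd, heq⟩ := wfold_xNC s₀ fix ((c : S) * s₀) n act hact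
  -- identify the elements
  have key : ∀ (g : ℕ → S) (hg : g ∈ Gf),
      (c : S) * (Y (l ⟨g, hg⟩) * x) = xNC m a t g * x := by
    intro g hg
    have h3 : (c : S) * (Y (l ⟨g, hg⟩) * x) = ((c : S) * Y (l ⟨g, hg⟩)) * x :=
      (mul_assoc _ _ _).symm
    rw [h3]
    congr 1
    show (c : S) * Wfold n _ s₀ = _
    rw [mul_Wfold, ← heq g]
    refine Wfold_congr _ (fun j hj => ?_)
    rw [dif_pos hj]
    congr 1
    rcases hopt : l.idxFun (e.symm ⟨j, hj⟩) with _ | b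
    · have hactj : act j := ⟨hj, hopt⟩
      rw [if_pos hactj]
      show ((l.idxFun (e.symm ⟨j, hj⟩)).getD _).1 j = g j
      rw [hopt]
      rfl
    · have hactj : ¬ act j := by
        rintro ⟨h', hnone⟩
        rw [hopt] at hnone
        exact Option.some_ne_none b hnone
      rw [if_neg hactj]
      show ((l.idxFun (e.symm ⟨j, hj⟩)).getD _).1 j = fix j
      rw [hopt]
      show b.1 j = fix j
      simp only [fix, dif_pos hj, hopt, Option.map_some, Option.getD_some]
  obtain ⟨k', hk'⟩ : ∃ k', m = k' + 1 := ⟨m - 1, by omega⟩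
  subst hk'
  refine ⟨k' + 1, Function.update a (k' + 1) (a (k' + 1) * x), t, le_add_self, hmono, ?_⟩
  intro g hg
  rw [xNC_mul, ← key g hg]
  exact hmem ⟨g, hg⟩

/-- A `J`-set admits witnesses with `t 0` arbitrarily large. -/
theorem jset_floor {B : Set S} (hJ : JSetNC B) (Gf : Finset (ℕ → S)) (hGf : Gf.Nonempty)
    (K : ℕ) :
    ∃ (m : ℕ) (a : ℕ → S) (t : ℕ → ℕ), 1 ≤ m ∧
      (∀ i j : ℕ, i < j → j < m → t i < t j) ∧ K ≤ t 0 ∧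
      ∀ f ∈ Gf, xNC m a t f ∈ B := by
  classical
  obtain ⟨m, a, t, h1, hmono, hmem⟩ :=
    hJ (Gf.image (fun f => fun i => f (i + K)))
      (hGf.image _)
  refine ⟨m, a, fun i => t i + K, h1, fun i j hij hj => by
    have := hmono i j hij hj; dsimp only; omega, Nat.le_add_left _ _, ?_⟩
  intro f hf
  have := hmem _ (Finset.mem_image_of_mem (fun f => fun i => f (i + K)) hf)
  exact this

/-! ### The recursive construction -/

/-- The data chosen at each finset: `(m, a, t, N)`. -/
abbrev DT (S : Type*) (I : Type) : Type _ := ℕ × (ℕ → S) × (ℕ → ℕ) × I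

/-- The `x`-value determined by the data at `F`. -/
def xFd {I : Type} (dt : Finset (ℕ → S) → DT S I) (F : Finset (ℕ → S)) (f : ℕ → S) : S :=
  xNC (dt F).1 (dt F).2.1 (dt F).2.2.1 f

/-- The full specification at `F` (relative to the total data function `dt`). -/
def SpecTot {I : Type} (C : I → Set S) (dt : Finset (ℕ → S) → DT S I)
    (F : Finset (ℕ → S)) : Prop :=
  (F.Nonempty → 1 ≤ (dt F).1) ∧
  (∀ i j, i < j → j < (dt F).1 → (dt F).2.2.1 i < (dt F).2.2.1 j) ∧
  (∀ G, G ⊂ F → G.Nonempty → (dt G).2.2.1 ((dt G).1 - 1) < (dt F).2.2.1 0) ∧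
  (∀ f ∈ F, xFd dt F f ∈ C (dt F).2.2.2) ∧
  (∀ (n : ℕ) (g : ℕ → Finset (ℕ → S)) (f : ℕ → ℕ → S),
    (g 0).Nonempty → (∀ i j, i < j → j ≤ n → g i ⊂ g j) → (∀ i ≤ n, f i ∈ g i) →
    g n ⊂ F → ∀ s ∈ C (dt F).2.2.2,
      seqProd (fun i => xFd dt (g i) (f i)) n * s ∈ C ((dt (g 0)).2.2.2))

/-- Products over chains with top `F`, paired with the index of the starting set. -/
def QSet {I : Type} (dt : Finset (ℕ → S) → DT S I) (F : Finset (ℕ → S)) : Set (S × I) :=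
  {p | ∃ (n : ℕ) (g : ℕ → Finset (ℕ → S)) (f : ℕ → ℕ → S),
    (g 0).Nonempty ∧ (∀ i j, i < j → j ≤ n → g i ⊂ g j) ∧ (∀ i ≤ n, f i ∈ g i) ∧
    g n = F ∧ p.1 = seqProd (fun i => xFd dt (g i) (f i)) n ∧ p.2 = (dt (g 0)).2.2.2}

theorem qset_finite {I : Type} (dt : Finset (ℕ → S) → DT S I) :
    ∀ F : Finset (ℕ → S), (QSet dt F).Finite := by
  intro F
  induction F using Finset.strongInductionOn with
  | _ F ih =>
    have hsub : QSet dt F ⊆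
        ((fun f => (xFd dt F f, (dt F).2.2.2)) '' (F : Set (ℕ → S))) ∪
        ⋃ G ∈ {G : Finset (ℕ → S) | G ⊂ F},
          (fun q : (S × I) × (ℕ → S) => (q.1.1 * xFd dt F q.2, q.1.2)) ''
            (QSet dt G ×ˢ (F : Set (ℕ → S))) := by
      rintro ⟨d, N⟩ ⟨n, g, f, hg0, hmono, hf, hgn, hd, hN⟩
      replace hd : d = seqProd (fun i => xFd dt (g i) (f i)) n := hd
      replace hN : N = (dt (g 0)).2.2.2 := hN
      cases n with
      | zero =>
          left
          refine ⟨f 0, by rw [← hgn]; exact hf 0 le_rfl, ?_⟩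
          have : d = xFd dt F (f 0) := by
            rw [hd, show seqProd (fun i => xFd dt (g i) (f i)) 0
              = xFd dt (g 0) (f 0) from rfl, hgn]
          rw [this, hN, hgn]
      | succ k =>
          right
          have hGF : g k ⊂ F := by rw [← hgn]; exact hmono k (k+1) k.lt_succ_self le_rfl
          refine Set.mem_biUnion hGF ?_
          refine ⟨((seqProd (fun i => xFd dt (g i) (f i)) k, (dt (g 0)).2.2.2), f (k+1)),
            ⟨⟨k, g, f, hg0, fun i j hij hj => hmono i j hij (hj.trans k.le_succ),
                fun i hi => hf i (hi.trans k.le_succ), rfl, rfl, rfl⟩, ?_⟩, ?_⟩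
          · show f (k+1) ∈ (F : Set (ℕ → S))
            rw [← hgn]; exact hf (k+1) le_rfl
          · have : d = seqProd (fun i => xFd dt (g i) (f i)) k * xFd dt F (f (k+1)) := by
              rw [hd, seqProd_succ]
              congr 1
              show xFd dt (g (k+1)) (f (k+1)) = xFd dt F (f (k+1))
              rw [hgn]
            rw [show ((d : S), N) = (d, N) from rfl]
            simp only [Prod.mk.injEq]
            exact ⟨this.symm, hN.symm⟩
    refine Set.Finite.subset (Set.Finite.union ?_ ?_) hsub
    · exact (F.finite_toSet).image _
    · refine Set.Finite.biUnion ?_ (fun G hG => ((ih G hG).prod F.finite_toSet).image _)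
      exact Set.Finite.subset (F.powerset.finite_toSet)
        (fun G hG => by simpa [Finset.mem_powerset] using hG.subset)

theorem chain_mem {I : Type} (C : I → Set S) (dt : Finset (ℕ → S) → DT S I) (n : ℕ)
    (g : ℕ → Finset (ℕ → S)) (f : ℕ → ℕ → S) (hg0 : (g 0).Nonempty)
    (hmono : ∀ i j, i < j → j ≤ n → g i ⊂ g j)
    (hf : ∀ i ≤ n, f i ∈ g i) (hspec : SpecTot C dt (g n)) :
    seqProd (fun i => xFd dt (g i) (f i)) n ∈ C ((dt (g 0)).2.2.2) := by
  cases n with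
  | zero => exact hspec.2.2.2.1 (f 0) (hf 0 le_rfl)
  | succ k =>
      rw [seqProd_succ]
      exact hspec.2.2.2.2 k g f hg0 (fun i j hij hj => hmono i j hij (hj.trans k.le_succ))
        (fun i hi => hf i (hi.trans k.le_succ)) (hmono k (k+1) k.lt_succ_self le_rfl)
        _ (hspec.2.2.2.1 (f (k+1)) (hf (k+1) le_rfl))

/-- Finitely many refinements can be combined (directedness). -/
theorem meet {I : Type} [Nonempty I] (C : I → Set S)
    (hdir : ∀ N M, ∃ P, C P ⊆ C N ∧ C P ⊆ C M)
    {γ : Type*} (T : Set γ) (hT : T.Finite) (V : γ → Set S)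
    (h : ∀ p ∈ T, ∃ M, C M ⊆ V p) : ∃ P, ∀ p ∈ T, C P ⊆ V p := by
  classical
  have key : ∀ L : Finset γ, (∀ p ∈ L, ∃ M, C M ⊆ V p) → ∃ P, ∀ p ∈ L, C P ⊆ V p := by
    intro L
    induction L using Finset.induction with
    | empty => exact fun _ => ⟨Classical.arbitrary I, by simp⟩
    | @insert a L' _ ihL =>
        intro h'
        obtain ⟨P, hP⟩ := ihL (fun p hp => h' p (Finset.mem_insert_of_mem hp))
        obtain ⟨M, hM⟩ := h' a (Finset.mem_insert_self _ _)
        obtain ⟨P', h1, h2⟩ := hdir P M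
        refine ⟨P', fun p hp => ?_⟩
        rcases Finset.mem_insert.mp hp with rfl | hp'
        · exact h2.trans hM
        · exact h1.trans (hP p hp')
  obtain ⟨P, hP⟩ := key hT.toFinset (fun p hp => h p (hT.mem_toFinset.mp hp))
  exact ⟨P, fun p hp => hP p (hT.mem_toFinset.mpr hp)⟩

open scoped Classical in
/-- One recursion step: choose good data at `F` given data on proper subsets. -/
noncomputable def stepD {I : Type} [Nonempty S] [Nonempty I] (C : I → Set S)
    (F : Finset (ℕ → S)) (prev : ∀ G, G ⊂ F → DT S I) : DT S I :=
  if h : ∃ d : DT S I, SpecTot C (fun G => if hG : G ⊂ F then prev G hG else d) F then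
    h.choose
  else Classical.arbitrary _

/-- The globally defined data function. -/
noncomputable def dtD {I : Type} [Nonempty S] [Nonempty I] (C : I → Set S) :
    Finset (ℕ → S) → DT S I :=
  Finset.strongInduction (fun F prev => stepD C F prev)

theorem specTot_congr {I : Type} (C : I → Set S) {dt dt' : Finset (ℕ → S) → DT S I}
    {F : Finset (ℕ → S)}
    (h : ∀ G, G ⊂ F → dt G = dt' G) (hF : dt F = dt' F) (hs : SpecTot C dt F) :
    SpecTot C dt' F := by
  obtain ⟨h1, h2, h3, h4, h5⟩ := hs
  refine ⟨by rw [← hF]; exact h1, by rw [← hF]; exact h2, ?_, ?_, ?_⟩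
  · intro G hG hGne
    rw [← hF, ← h G hG]
    exact h3 G hG hGne
  · intro f hf
    have := h4 f hf
    rwa [show xFd dt' F f = xFd dt F f by unfold xFd; rw [hF], ← hF]
  · intro n g f hg0 hmono hf hgn s hs'
    have hgi : ∀ i ≤ n, g i ⊂ F := by
      intro i hi
      rcases hi.lt_or_eq with hi' | rfl
      · exact (hmono i n hi' le_rfl).trans hgn
      · exact hgn
    have hprod : seqProd (fun i => xFd dt' (g i) (f i)) n
        = seqProd (fun i => xFd dt (g i) (f i)) n :=
      seqProd_congr (fun i hi => by unfold xFd; rw [h (g i) (hgi i hi)])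
    rw [hprod, ← h (g 0) (hgi 0 (Nat.zero_le n))]
    exact h5 n g f hg0 hmono hf hgn s (by rwa [hF])

theorem dt_spec {I : Type} [Nonempty S] [Nonempty I] (C : I → Set S)
    (hdir : ∀ N M, ∃ P, C P ⊆ C N ∧ C P ⊆ C M)
    (hstar : ∀ N, ∀ y ∈ C N, ∃ M, C M ⊆ {s | y * s ∈ C N})
    (hJ : ∀ N, JSetNC (C N)) :
    ∀ F : Finset (ℕ → S), SpecTot C (dtD C) F := by
  classical
  intro F
  induction F using Finset.strongInductionOn with
  | _ F ih =>
    suffices hex : ∃ d : DT S I,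
        SpecTot C (fun G => if hG : G ⊂ F then dtD C G else d) F by
      have hstep : dtD C F = stepD C F (fun G _ => dtD C G) := by
        show Finset.strongInduction _ F = _
        rw [Finset.strongInduction_eq]
        rfl
      have hpos : dtD C F = hex.choose := by
        rw [hstep]
        simp only [stepD]
        rw [dif_pos hex]
      refine specTot_congr C (dt := fun G => if hG : G ⊂ F then dtD C G else hex.choose)
        (fun G hG => dif_pos hG) ?_ hex.choose_spec
      show dite (F ⊂ F) _ _ = _
      rw [dif_neg (ssubset_irrefl F), hpos]
    rcases F.eq_empty_or_nonempty with rfl | hF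
    · refine ⟨(1, fun _ => Classical.arbitrary S, id, Classical.arbitrary I), ?_⟩
      set d₀ : DT S I := (1, fun _ => Classical.arbitrary S, id, Classical.arbitrary I) with hd₀
      have hxF : (fun G => if hG : G ⊂ (∅ : Finset (ℕ → S)) then dtD C G else d₀) ∅ = d₀ :=
        dif_neg (ssubset_irrefl _)
      refine ⟨?_, ?_, ?_, ?_, ?_⟩
      · rintro ⟨f, hf⟩; exact absurd hf (Finset.notMem_empty f)
      · intro i j hij hj
        rw [hxF] at hj ⊢
        exact hij
      · intro G hG; exact absurd hG (Finset.not_ssubset_empty G)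
      · intro f hf; exact absurd hf (Finset.notMem_empty f)
      · intro n g f _ _ _ hgn; exact absurd hgn (Finset.not_ssubset_empty _)
    · -- main case
      have hWfin : (⋃ G ∈ {G : Finset (ℕ → S) | G ⊂ F}, QSet (dtD C) G).Finite := by
        refine Set.Finite.biUnion ?_ (fun G _ => qset_finite (dtD C) G)
        exact Set.Finite.subset (F.powerset.finite_toSet)
          (fun G hG => by simpa [Finset.mem_powerset] using hG.subset)
      have hWmem : ∀ p ∈ ⋃ G ∈ {G : Finset (ℕ → S) | G ⊂ F}, QSet (dtD C) G,
          p.1 ∈ C p.2 := by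
        rintro ⟨d, N⟩ hp
        obtain ⟨G, hG, hq⟩ := Set.mem_iUnion₂.mp hp
        obtain ⟨n, g, f, hg0, hmono, hf, hgn, hd, hN⟩ := hq
        replace hd : d = seqProd (fun i => xFd (dtD C) (g i) (f i)) n := hd
        replace hN : N = ((dtD C) (g 0)).2.2.2 := hN
        show d ∈ C N
        rw [hd, hN]
        exact chain_mem C (dtD C) n g f hg0 hmono hf (by rw [hgn]; exact ih G hG)
      obtain ⟨NF, hNF⟩ := meet C hdir _ hWfin (fun p => {s | p.1 * s ∈ C p.2})
        (fun p hp => hstar p.2 p.1 (hWmem p hp))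
      obtain ⟨m, a, t, h1, hmono, hKt, hmem⟩ := jset_floor (hJ NF) F hF
        (F.powerset.sup (fun G => (dtD C G).2.2.1 ((dtD C G).1 - 1) + 1))
      refine ⟨(m, a, t, NF), ?_⟩
      set d₀ : DT S I := (m, a, t, NF) with hd₀
      set dtx : Finset (ℕ → S) → DT S I :=
        (fun G => if hG : G ⊂ F then dtD C G else d₀) with hdtx
      have hxF : dtx F = d₀ := dif_neg (ssubset_irrefl _)
      have hxG : ∀ G, G ⊂ F → dtx G = dtD C G := fun G hG => dif_pos hG
      refine ⟨?_, ?_, ?_, ?_, ?_⟩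
      · intro _; rw [hxF]; exact h1
      · intro i j hij hj
        rw [hxF] at hj ⊢
        exact hmono i j hij hj
      · intro G hG hGne
        rw [hxF, hxG G hG]
        have hle : (dtD C G).2.2.1 ((dtD C G).1 - 1) + 1
            ≤ F.powerset.sup (fun G => (dtD C G).2.2.1 ((dtD C G).1 - 1) + 1) :=
          Finset.le_sup (f := fun G => (dtD C G).2.2.1 ((dtD C G).1 - 1) + 1)
            (Finset.mem_powerset.mpr hG.subset)
        show (dtD C G).2.2.1 ((dtD C G).1 - 1) < t 0
        omega
      · intro f hf
        show xFd dtx F f ∈ C (dtx F).2.2.2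
        unfold xFd
        rw [hxF]
        exact hmem f hf
      · intro n g f hg0 hmono' hf hgn s hs'
        have hgi : ∀ i ≤ n, g i ⊂ F := by
          intro i hi
          rcases hi.lt_or_eq with hi' | rfl
          · exact (hmono' i n hi' le_rfl).trans hgn
          · exact hgn
        have hprod : seqProd (fun i => xFd dtx (g i) (f i)) n
            = seqProd (fun i => xFd (dtD C) (g i) (f i)) n :=
          seqProd_congr (fun i hi => by unfold xFd; rw [hxG (g i) (hgi i hi)])
        rw [hprod, hxG (g 0) (hgi 0 (Nat.zero_le n))]
        have hpW : (seqProd (fun i => xFd (dtD C) (g i) (f i)) n, (dtD C (g 0)).2.2.2)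
            ∈ ⋃ G ∈ {G : Finset (ℕ → S) | G ⊂ F}, QSet (dtD C) G := by
          refine Set.mem_biUnion hgn ?_
          exact ⟨n, g, f, hg0, hmono', hf, rfl, rfl, rfl⟩
        have hsNF : s ∈ C NF := by
          rw [hxF] at hs'
          exact hs'
        exact hNF _ hpW hsNF

end SCST

/-- the stronger Central Sets Theorem for arbitrary semigroups.
Chains `G₁ ⊊ ⋯ ⊊ G_{n+1}` are coded by `g : ℕ → Finset (ℕ → S)` restricted to
indices `≤ n`; `τ F (m F - 1)` is the last entry of the tuple `τ F`. -/


theorem strongerCentralSetsTheorem {S : Type*} [Semigroup S]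
    (A : Set S) (hA : Central A) :
    ∃ (m : Finset (ℕ → S) → ℕ) (α : Finset (ℕ → S) → ℕ → S)
      (τ : Finset (ℕ → S) → ℕ → ℕ),
      (∀ F : Finset (ℕ → S), F.Nonempty → 1 ≤ m F) ∧
      (∀ F : Finset (ℕ → S), F.Nonempty →
        ∀ i j : ℕ, i < j → j < m F → τ F i < τ F j) ∧
      (∀ F G : Finset (ℕ → S), F.Nonempty → F ⊂ G →
        τ F (m F - 1) < τ G 0) ∧
      (∀ (n : ℕ) (g : ℕ → Finset (ℕ → S)) (f : ℕ → ℕ → S),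
        (g 0).Nonempty → (∀ i j : ℕ, i < j → j ≤ n → g i ⊂ g j) →
        (∀ i : ℕ, i ≤ n → f i ∈ g i) →
        seqProd (fun i => xNC (m (g i)) (α (g i)) (τ (g i)) (f i)) n ∈ A) := by
  classical
  obtain ⟨I, C, hI, hCA, hdir, hstar, Gfun, xfun, hcw⟩ := hA
  haveI : Nonempty I := hI
  haveI : Nonempty S := ⟨xfun ∅ ∅⟩
  have hJ : ∀ N, JSetNC (C N) := by
    intro N
    refine SCST.pw_jset (C N) (xfun ∅ ∅) (Gfun {C N}) ?_
    intro E
    refine ⟨xfun {C N} E, fun e he => ?_⟩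
    obtain ⟨t, ht, hmem⟩ := hcw E {C N} {C N} (Finset.singleton_nonempty _)
      (by
        intro B hB
        simp only [Finset.coe_singleton, Set.mem_singleton_iff] at hB
        exact ⟨N, hB⟩)
      (subset_refl _) e he
    refine ⟨t, ht, ?_⟩
    simpa using hmem
  have hspec := SCST.dt_spec C hdir hstar hJ
  refine ⟨fun F => (SCST.dtD C F).1, fun F => (SCST.dtD C F).2.1,
    fun F => (SCST.dtD C F).2.2.1, ?_, ?_, ?_, ?_⟩
  · exact fun F hF => (hspec F).1 hF
  · exact fun F _ i j hij hj => (hspec F).2.1 i j hij hj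
  · exact fun F G hF hFG => (hspec G).2.2.1 F hFG hF
  · intro n g f hg0 hmono hf
    exact hCA _ (SCST.chain_mem C (SCST.dtD C) n g f hg0 hmono hf (hspec (g n)))
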